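/- With the hypotheses of the previous setup (f an index-d first-order cyclotomic permutation of F_q with induced coset permutation ψ and cycle products π(ζ) ∈ C), every x ∈ C_i with i on a cycle ζ of ψ has cycle length under f equal to ℓ(ζ) · ord(π(ζ)), where ℓ(ζ) is the length of ζ and ord denotes multiplicative order in F_q^*. Consequently, on the union U(ζ) = ⋃_{i ∈ supp(ζ)} C_i, the permutation f decomposes into exactly (q-1)/(d·ord(π(ζ))) disjoint cycles, each of length ℓ(ζ)·ord(π(ζ)). -/

import Mathlib

/-- For an index-`d` first-order cyclotomic permutation `f` of `F` with induced coset
permutation `ψ` and cycle products `π(ζ)`, every `x ∈ C_i` with `i` on a cycle `ζ` of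
`ψ` has cycle length (minimal period) under `f` equal to `ℓ(ζ) · ord(π(ζ))`; and on
`U(ζ) = ⋃_{i ∈ supp ζ} C_i`, `f` decomposes into exactly `(q-1)/(d·ord(π(ζ)))`
disjoint cycles (orbits). -/
theorem stmt4 {F : Type*} [Field F] [Fintype F] [DecidableEq F]
    (d : ℕ) [NeZero d] (hdvd : d ∣ Fintype.card F - 1)
    (ω : Fˣ) (hω : ∀ x : Fˣ, x ∈ Subgroup.zpowers ω)
    (a : ZMod d → Fˣ)
    (f : F → F) (hf0 : f 0 = 0)
    (hf : ∀ e : ℤ, f ((ω ^ e : Fˣ) : F) = ((a ((e : ZMod d)) : F)) * ((ω ^ e : Fˣ) : F))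
    (hbij : Function.Bijective f)
    (ψ : Equiv.Perm (ZMod d))
    (hψ : ∀ e : ℤ, ∃ c : ℤ, f ((ω ^ e : Fˣ) : F) = ((ω ^ c : Fˣ) : F) ∧
      (c : ZMod d) = ψ ((e : ZMod d))) :
    ∀ i : ZMod d,
      (∀ e : ℤ, (e : ZMod d) = i →
        Function.minimalPeriod f ((ω ^ e : Fˣ) : F)
          = (Finset.univ.filter (fun j => ψ.SameCycle i j)).card
            * orderOf (∏ j ∈ Finset.univ.filter (fun j => ψ.SameCycle i j), a j))
      ∧ {S : Set F | ∃ e : ℤ, ψ.SameCycle i ((e : ZMod d)) ∧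
            S = {y : F | ∃ n : ℕ, f^[n] ((ω ^ e : Fˣ) : F) = y}}.ncard
          = (Fintype.card F - 1)
            / (d * orderOf (∏ j ∈ Finset.univ.filter (fun j => ψ.SameCycle i j), a j)) := by
  have hcard : orderOf ω = Fintype.card F - 1 := by
    rw [orderOf_eq_card_of_forall_mem_zpowers hω, Nat.card_eq_fintype_card, Fintype.card_units]
  have hq1 : 0 < Fintype.card F - 1 := by
    rw [← hcard]; exact orderOf_pos ω
  have hwiff : ∀ c e : ℤ, (ω ^ c : Fˣ) = ω ^ e ↔ ((Fintype.card F - 1 : ℕ) : ℤ) ∣ (c - e) := by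
    intro c e
    rw [← hcard, orderOf_dvd_iff_zpow_eq_one, zpow_sub, mul_inv_eq_one]
  have hwd : ∀ c e : ℤ, (ω ^ c : Fˣ) = ω ^ e → (c : ZMod d) = (e : ZMod d) := by
    intro c e h
    have h2 : (d : ℤ) ∣ c - e :=
      dvd_trans (Int.natCast_dvd_natCast.mpr hdvd) ((hwiff c e).mp h)
    have h3 : ((c - e : ℤ) : ZMod d) = 0 := (ZMod.intCast_zmod_eq_zero_iff_dvd _ d).mpr h2
    push_cast at h3
    exact sub_eq_zero.mp h3
  -- iterates of `f` on units
  have key : ∀ (n : ℕ) (e : ℤ), ∃ c : ℤ, ((c : ZMod d) = (ψ ^ n) ((e : ZMod d))) ∧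
      (ω ^ c : Fˣ) = (∏ k ∈ Finset.range n, a ((ψ ^ k) ((e : ZMod d)))) * ω ^ e ∧
      f^[n] ((ω ^ e : Fˣ) : F) = ((ω ^ c : Fˣ) : F) := by
    intro n
    induction n with
    | zero => intro e; exact ⟨e, by simp, by simp, by simp⟩
    | succ n ih =>
      intro e
      obtain ⟨c, hc1, hc2, hc3⟩ := ih e
      obtain ⟨c', hc'1, hc'2⟩ := hψ c
      refine ⟨c', ?_, ?_, ?_⟩
      · rw [hc'2, hc1, pow_succ', Equiv.Perm.mul_apply]
      · have h1 : ((ω ^ c' : Fˣ) : F) = ((a ((c : ZMod d)) * ω ^ c : Fˣ) : F) := by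
          rw [← hc'1, hf c]; norm_cast
        have h2 : (ω ^ c' : Fˣ) = a ((c : ZMod d)) * ω ^ c := Units.ext h1
        rw [h2, hc1, hc2, Finset.prod_range_succ, ← mul_assoc,
          mul_comm (a ((ψ ^ n) ((e : ZMod d))))]
      · rw [Function.iterate_succ_apply', hc3, hc'1]
  have hper : ∀ (n : ℕ) (e : ℤ), Function.IsPeriodicPt f n ((ω ^ e : Fˣ) : F) ↔
      (∏ k ∈ Finset.range n, a ((ψ ^ k) ((e : ZMod d)))) = 1 := by
    intro n e
    obtain ⟨c, hc1, hc2, hc3⟩ := key n e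
    rw [Function.IsPeriodicPt, Function.IsFixedPt, hc3]
    constructor
    · intro h
      have h2 : (ω ^ c : Fˣ) = ω ^ e := Units.ext h
      rw [hc2, mul_eq_right] at h2
      exact h2
    · intro h
      rw [show (ω ^ c : Fˣ) = ω ^ e from by rw [hc2, h, one_mul]]
  have hfixp : ∀ (n : ℕ) (e : ℤ), Function.IsPeriodicPt f n ((ω ^ e : Fˣ) : F) →
      (ψ ^ n) ((e : ZMod d)) = (e : ZMod d) := by
    intro n e h
    obtain ⟨c, hc1, hc2, hc3⟩ := key n e
    have h' : f^[n] ((ω ^ e : Fˣ) : F) = ((ω ^ e : Fˣ) : F) := h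
    rw [hc3] at h'
    have h2 : (ω ^ c : Fˣ) = ω ^ e := Units.ext h'
    rw [← hc1]
    exact hwd c e h2
  -- facts about ψ, for every i
  have hMfix : ∀ (i : ZMod d) (n : ℕ),
      ((ψ ^ n) i = i ↔ Function.minimalPeriod (⇑ψ) i ∣ n) := by
    intro i n
    rw [← Function.isPeriodicPt_iff_minimalPeriod_dvd]
    constructor
    · intro h
      show (⇑ψ)^[n] i = i
      rw [Equiv.Perm.iterate_eq_pow]; exact h
    · intro h
      have := h
      rwa [Function.IsPeriodicPt, Function.IsFixedPt, Equiv.Perm.iterate_eq_pow] at this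
  have hM0 : ∀ i : ZMod d, 0 < Function.minimalPeriod (⇑ψ) i := by
    intro i
    refine Function.IsPeriodicPt.minimalPeriod_pos (orderOf_pos ψ) ?_
    show (⇑ψ)^[orderOf ψ] i = i
    rw [Equiv.Perm.iterate_eq_pow, pow_orderOf_eq_one]; rfl
  have hinj : ∀ i : ZMod d, ∀ k1 ∈ Finset.range (Function.minimalPeriod (⇑ψ) i),
      ∀ k2 ∈ Finset.range (Function.minimalPeriod (⇑ψ) i), (ψ ^ k1) i = (ψ ^ k2) i → k1 = k2 := by
    intro i k1 h1 k2 h2 heq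
    wlog hle : k1 ≤ k2 generalizing k1 k2
    · exact (this k2 h2 k1 h1 heq.symm (le_of_not_ge hle)).symm
    have h4 : (ψ ^ k1) ((ψ ^ (k2 - k1)) i) = (ψ ^ k1) i := by
      rw [← Equiv.Perm.mul_apply, ← pow_add, Nat.add_sub_cancel' hle, ← heq]
    have h3 := (ψ ^ k1).injective h4
    have h5 := (hMfix i (k2 - k1)).mp h3
    have hlt : k2 - k1 < Function.minimalPeriod (⇑ψ) i :=
      lt_of_le_of_lt (Nat.sub_le _ _) (Finset.mem_range.mp h2)
    have h0 : k2 - k1 = 0 := Nat.eq_zero_of_dvd_of_lt h5 hlt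
    omega
  have hzfix : ∀ (i : ZMod d) (z : ℤ), (ψ ^ ((Function.minimalPeriod (⇑ψ) i : ℤ) * z)) i = i := by
    intro i z
    rw [zpow_mul]
    refine Equiv.Perm.zpow_apply_eq_self_of_apply_eq_self ?_ z
    rw [zpow_natCast]
    exact (hMfix i _).mpr dvd_rfl
  have hsc : ∀ i j : ZMod d, ψ.SameCycle i j ↔
      ∃ k ∈ Finset.range (Function.minimalPeriod (⇑ψ) i), (ψ ^ k) i = j := by
    intro i j
    constructor
    · rintro ⟨b, rfl⟩
      set M := Function.minimalPeriod (⇑ψ) i with hMdef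
      have hMz : (0 : ℤ) < (M : ℤ) := by exact_mod_cast hM0 i
      have hnn : 0 ≤ b % (M : ℤ) := Int.emod_nonneg b hMz.ne'
      have hltz : b % (M : ℤ) < M := Int.emod_lt_of_pos b hMz
      refine ⟨(b % (M : ℤ)).toNat, Finset.mem_range.mpr (by omega), ?_⟩
      have h1 : (ψ ^ b) i = (ψ ^ (b % (M : ℤ))) i := by
        conv_lhs => rw [show b = (M : ℤ) * (b / (M : ℤ)) + b % (M : ℤ) from (Int.mul_ediv_add_emod b (M : ℤ)).symm]
        rw [add_comm, zpow_add, Equiv.Perm.mul_apply, hzfix i]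
      rw [h1, ← zpow_natCast, Int.toNat_of_nonneg hnn]
    · rintro ⟨k, -, rfl⟩
      exact ⟨(k : ℤ), by rw [zpow_natCast]⟩
  have hset : ∀ i : ZMod d, Finset.univ.filter (fun j => ψ.SameCycle i j)
      = (Finset.range (Function.minimalPeriod (⇑ψ) i)).image (fun k => (ψ ^ k) i) := by
    intro i
    ext j
    simp only [Finset.mem_filter, Finset.mem_univ, true_and, Finset.mem_image, hsc i j]
  have hL : ∀ i : ZMod d, (Finset.univ.filter (fun j => ψ.SameCycle i j)).card
      = Function.minimalPeriod (⇑ψ) i := by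
    intro i
    rw [hset i, Finset.card_image_of_injOn (fun k1 h1 k2 h2 h => hinj i k1 h1 k2 h2 h),
      Finset.card_range]
  have hpi : ∀ i : ZMod d, (∏ j ∈ Finset.univ.filter (fun j => ψ.SameCycle i j), a j)
      = ∏ k ∈ Finset.range (Function.minimalPeriod (⇑ψ) i), a ((ψ ^ k) i) := by
    intro i
    rw [hset i, Finset.prod_image (hinj i)]
  -- products over multiples of the cycle length
  have hPk : ∀ (i : ZMod d) (k : ℕ),
      (∏ j ∈ Finset.range (Function.minimalPeriod (⇑ψ) i * k), a ((ψ ^ j) i))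
        = (∏ j ∈ Finset.univ.filter (fun j => ψ.SameCycle i j), a j) ^ k := by
    intro i k
    induction k with
    | zero => simp
    | succ k ih =>
      rw [Nat.mul_succ, Finset.prod_range_add, ih, pow_succ, hpi i]
      congr 1
      refine Finset.prod_congr rfl ?_
      intro j hj
      congr 1
      rw [add_comm, pow_add, Equiv.Perm.mul_apply, (hMfix i _).mpr ⟨k, rfl⟩]
  have hPiff : ∀ (i : ZMod d) (n : ℕ),
      ((∏ k ∈ Finset.range n, a ((ψ ^ k) i)) = 1 ↔
        (Function.minimalPeriod (⇑ψ) i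
          * orderOf (∏ j ∈ Finset.univ.filter (fun j => ψ.SameCycle i j), a j)) ∣ n) := by
    intro i n
    have he0 : (((i.val : ℤ)) : ZMod d) = i := by
      push_cast
      exact ZMod.natCast_rightInverse i
    constructor
    · intro h
      have hp : Function.IsPeriodicPt f n ((ω ^ (i.val : ℤ) : Fˣ) : F) := by
        rw [hper n (i.val : ℤ), he0]; exact h
      have hfix := hfixp n (i.val : ℤ) hp
      rw [he0] at hfix
      obtain ⟨k, rfl⟩ := (hMfix i n).mp hfix
      rw [hPk i k] at h
      exact mul_dvd_mul_left _ (orderOf_dvd_of_pow_eq_one h)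
    · rintro ⟨s, rfl⟩
      rw [mul_assoc, hPk i, pow_mul, pow_orderOf_eq_one, one_pow]
  -- periodicity criterion for points on the cycle of i
  have hsamefil : ∀ i j : ZMod d, ψ.SameCycle i j →
      Finset.univ.filter (fun k => ψ.SameCycle i k) = Finset.univ.filter (fun k => ψ.SameCycle j k) := by
    intro i j h
    ext k
    simp only [Finset.mem_filter, Finset.mem_univ, true_and]
    exact ⟨fun h' => h.symm.trans h', fun h' => h.trans h'⟩
  have hNsame : ∀ i j : ZMod d, ψ.SameCycle i j →
      Function.minimalPeriod (⇑ψ) j * orderOf (∏ k ∈ Finset.univ.filter (fun k => ψ.SameCycle j k), a k)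
        = Function.minimalPeriod (⇑ψ) i * orderOf (∏ k ∈ Finset.univ.filter (fun k => ψ.SameCycle i k), a k) := by
    intro i j h
    rw [← hL i, ← hL j, hsamefil i j h]
  have hNiff : ∀ (i : ZMod d) (e : ℤ), ψ.SameCycle i ((e : ZMod d)) → ∀ n : ℕ,
      (Function.IsPeriodicPt f n ((ω ^ e : Fˣ) : F) ↔
        (Function.minimalPeriod (⇑ψ) i
          * orderOf (∏ j ∈ Finset.univ.filter (fun j => ψ.SameCycle i j), a j)) ∣ n) := by
    intro i e hsame n
    rw [hper n e, hPiff ((e : ZMod d)) n, hNsame i ((e : ZMod d)) hsame]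
  intro i
  set M := Function.minimalPeriod (⇑ψ) i with hMdef
  set m := orderOf (∏ j ∈ Finset.univ.filter (fun j => ψ.SameCycle i j), a j) with hmdef
  have hm0 : 0 < m := orderOf_pos _
  have hN0 : 0 < M * m := Nat.mul_pos (hM0 i) hm0
  constructor
  · intro e he
    have hiff := hNiff i e (by rw [he])
    rw [hL i]
    exact Nat.dvd_antisymm
      (Function.IsPeriodicPt.minimalPeriod_dvd ((hiff (M * m)).mpr dvd_rfl))
      ((hiff _).mp (Function.isPeriodicPt_minimalPeriod f _))
  · classical
    set N := M * m with hNdef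
    set t := (Fintype.card F - 1) / d with htdef
    have hdt : d * t = Fintype.card F - 1 := Nat.mul_div_cancel' hdvd
    have ht0 : 0 < t := by
      rcases Nat.eq_zero_or_pos t with h | h
      · rw [h, Nat.mul_zero] at hdt; omega
      · exact h
    set UF : Finset F := Finset.univ.filter
      (fun x => ∃ e : ℤ, ψ.SameCycle i ((e : ZMod d)) ∧ x = ((ω ^ e : Fˣ) : F)) with hUF
    set orbF : F → Finset F := fun x => (Finset.range N).image (fun n => f^[n] x) with horbF
    have hUmem : ∀ e : ℤ, ψ.SameCycle i ((e : ZMod d)) → ((ω ^ e : Fˣ) : F) ∈ UF := by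
      intro e hs
      simp only [hUF, Finset.mem_filter, Finset.mem_univ, true_and]
      exact ⟨e, hs, rfl⟩
    have hUrep : ∀ x ∈ UF, ∃ e : ℤ, ψ.SameCycle i ((e : ZMod d)) ∧ x = ((ω ^ e : Fˣ) : F) := by
      intro x hx
      simpa only [hUF, Finset.mem_filter, Finset.mem_univ, true_and] using hx
    have hperN : ∀ x ∈ UF, Function.IsPeriodicPt f N x := by
      intro x hx
      obtain ⟨e, hs, rfl⟩ := hUrep x hx
      exact (hNiff i e hs N).mpr dvd_rfl
    have hUclosed : ∀ x ∈ UF, ∀ n : ℕ, f^[n] x ∈ UF := by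
      intro x hx n
      obtain ⟨e, hs, rfl⟩ := hUrep x hx
      obtain ⟨c, hc1, hc2, hc3⟩ := key n e
      rw [hc3]
      refine hUmem c ?_
      rw [hc1]
      exact hs.trans ⟨(n : ℤ), by rw [zpow_natCast]⟩
    have horbmem : ∀ x : F, Function.IsPeriodicPt f N x → ∀ j : ℕ, f^[j] x ∈ orbF x := by
      intro x hx j
      have h1 : f^[j] x = f^[j % N] x := by
        conv_lhs => rw [show j = j % N + N * (j / N) from by rw [Nat.mod_add_div]]
        rw [Function.iterate_add_apply, (hx.mul_const (j / N) : _)]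
      rw [h1]
      exact Finset.mem_image.mpr ⟨j % N, Finset.mem_range.mpr (Nat.mod_lt _ hN0), rfl⟩
    have horbper : ∀ x : F, Function.IsPeriodicPt f N x → ∀ y ∈ orbF x,
        Function.IsPeriodicPt f N y := by
      intro x hx y hy
      obtain ⟨k, -, rfl⟩ := Finset.mem_image.mp hy
      show f^[N] (f^[k] x) = f^[k] x
      rw [← Function.iterate_add_apply, add_comm, Function.iterate_add_apply, hx]
    have horbeq : ∀ x : F, Function.IsPeriodicPt f N x → ∀ y ∈ orbF x, orbF y = orbF x := by
      intro x hx y hy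
      obtain ⟨k, hk, rfl⟩ := Finset.mem_image.mp hy
      have hk' : k < N := Finset.mem_range.mp hk
      apply Finset.Subset.antisymm
      · intro z hz
        obtain ⟨n, -, rfl⟩ := Finset.mem_image.mp hz
        rw [← Function.iterate_add_apply]
        exact horbmem x hx _
      · intro z hz
        obtain ⟨n, -, rfl⟩ := Finset.mem_image.mp hz
        have hxy : f^[N - k] (f^[k] x) = x := by
          rw [← Function.iterate_add_apply, Nat.sub_add_cancel hk'.le]
          exact hx
        rw [show f^[n] x = f^[n + (N - k)] (f^[k] x) from by
          rw [Function.iterate_add_apply, hxy]]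
        exact horbmem _ (horbper x hx _ (Finset.mem_image.mpr ⟨k, hk, rfl⟩)) _
    have horbcard : ∀ x ∈ UF, (orbF x).card = N := by
      intro x hx
      obtain ⟨e, hs, rfl⟩ := hUrep x hx
      rw [horbF]
      rw [Finset.card_image_of_injOn ?_, Finset.card_range]
      have key2 : ∀ n1 n2 : ℕ, n1 ≤ n2 → n2 < N →
          f^[n1] ((ω ^ e : Fˣ) : F) = f^[n2] ((ω ^ e : Fˣ) : F) → n1 = n2 := by
        intro n1 n2 hle h2 heq'
        have h3 : f^[n1] (f^[n2 - n1] ((ω ^ e : Fˣ) : F)) = f^[n1] ((ω ^ e : Fˣ) : F) := by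
          rw [← Function.iterate_add_apply, Nat.add_sub_cancel' hle, heq']
        have h4 := (hbij.injective.iterate n1) h3
        have h5 : (M * m) ∣ n2 - n1 := (hNiff i e hs _).mp h4
        have h6 : n2 - n1 = 0 :=
          Nat.eq_zero_of_dvd_of_lt h5 (lt_of_le_of_lt (Nat.sub_le _ _) h2)
        omega
      intro n1 h1 n2 h2 heq
      simp only [Finset.coe_range, Set.mem_Iio] at h1 h2
      have heq' : f^[n1] ((ω ^ e : Fˣ) : F) = f^[n2] ((ω ^ e : Fˣ) : F) := heq
      rcases le_total n1 n2 with hle | hle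
      · exact key2 n1 n2 hle h2 heq'
      · exact (key2 n2 n1 hle h1 heq'.symm).symm
    set CF : ZMod d → Finset F := fun j => Finset.univ.filter
      (fun x => ∃ c : ℤ, (c : ZMod d) = j ∧ x = ((ω ^ c : Fˣ) : F)) with hCF
    have hq1' : ((Fintype.card F - 1 : ℕ) : ℤ) = (d : ℤ) * t := by
      rw [← hdt]; push_cast; ring
    have hCFcard : ∀ j : ZMod d, (CF j).card = t := by
      intro j
      have hje : (((j.val : ℤ)) : ZMod d) = j := by
        push_cast
        exact ZMod.natCast_rightInverse j
      have himg : CF j = (Finset.range t).image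
          (fun k : ℕ => ((ω ^ ((j.val : ℤ) + d * k) : Fˣ) : F)) := by
        ext x
        simp only [hCF, Finset.mem_filter, Finset.mem_univ, true_and, Finset.mem_image]
        constructor
        · rintro ⟨c, hc, rfl⟩
          have hdc : (d : ℤ) ∣ c - (j.val : ℤ) := by
            refine (ZMod.intCast_zmod_eq_zero_iff_dvd _ d).mp ?_
            push_cast
            rw [hc, ZMod.natCast_rightInverse j, sub_self]
          obtain ⟨z, hz⟩ := hdc
          have htz : (0 : ℤ) < (t : ℤ) := by exact_mod_cast ht0
          have hnn : 0 ≤ z % (t : ℤ) := Int.emod_nonneg z htz.ne'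
          have hlt : z % (t : ℤ) < t := Int.emod_lt_of_pos z htz
          refine ⟨(z % (t : ℤ)).toNat, Finset.mem_range.mpr (by omega), ?_⟩
          refine congrArg _ ((hwiff _ _).mpr ?_)
          rw [hq1']
          have h1 : ((z % (t : ℤ)).toNat : ℤ) = z % (t : ℤ) := Int.toNat_of_nonneg hnn
          have h2 : z % (t : ℤ) + (t : ℤ) * (z / (t : ℤ)) = z := Int.emod_add_mul_ediv z t
          refine ⟨-(z / (t : ℤ)), ?_⟩
          push_cast [h1]
          linear_combination (-1 : ℤ) * hz + (d : ℤ) * h2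
        · rintro ⟨k, -, rfl⟩
          refine ⟨(j.val : ℤ) + d * k, ?_, rfl⟩
          push_cast
          rw [ZMod.natCast_self, zero_mul, add_zero]
          exact ZMod.natCast_rightInverse j
      rw [himg, Finset.card_image_of_injOn ?_, Finset.card_range]
      intro k1 h1 k2 h2 heq
      simp only [Finset.coe_range, Set.mem_Iio] at h1 h2
      have hu : (ω ^ ((j.val : ℤ) + d * k1) : Fˣ) = ω ^ ((j.val : ℤ) + d * k2) :=
        Units.ext heq
      have hdvd2 := (hwiff _ _).mp hu
      rw [hq1'] at hdvd2
      have h4 : ((j.val : ℤ) + d * k1) - ((j.val : ℤ) + d * k2) = (d : ℤ) * ((k1 : ℤ) - k2) := by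
        push_cast; ring
      rw [h4] at hdvd2
      have hd0 : (d : ℤ) ≠ 0 := by exact_mod_cast (NeZero.ne d)
      have h6 : (t : ℤ) ∣ ((k1 : ℤ) - k2) := (mul_dvd_mul_iff_left hd0).mp hdvd2
      have h7 : ((k1 : ℤ) - k2) = 0 :=
        Int.eq_zero_of_dvd_of_natAbs_lt_natAbs h6 (by omega)
      omega
    have hdisj : ∀ j1 ∈ Finset.univ.filter (fun j => ψ.SameCycle i j),
        ∀ j2 ∈ Finset.univ.filter (fun j => ψ.SameCycle i j), j1 ≠ j2 →
        Disjoint (CF j1) (CF j2) := by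
      intro j1 _ j2 _ hne
      rw [Finset.disjoint_left]
      intro x hx1 hx2
      simp only [hCF, Finset.mem_filter, Finset.mem_univ, true_and] at hx1 hx2
      obtain ⟨c1, hc1, rfl⟩ := hx1
      obtain ⟨c2, hc2, heq⟩ := hx2
      exact hne (by rw [← hc1, ← hc2, hwd c1 c2 (Units.ext heq)])
    have hUdec : UF = (Finset.univ.filter (fun j => ψ.SameCycle i j)).biUnion CF := by
      ext x
      simp only [hUF, hCF, Finset.mem_filter, Finset.mem_univ, true_and, Finset.mem_biUnion]
      constructor
      · rintro ⟨e, hs, rfl⟩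
        exact ⟨(e : ZMod d), hs, e, rfl, rfl⟩
      · rintro ⟨j, hs, c, hc, rfl⟩
        exact ⟨c, hc ▸ hs, rfl⟩
    have hUcard : UF.card = M * t := by
      rw [hUdec, Finset.card_biUnion hdisj,
        Finset.sum_congr rfl (fun j _ => hCFcard j), Finset.sum_const, smul_eq_mul, hL i]
    have hfib : ∀ x ∈ UF, UF.filter (fun y => orbF y = orbF x) = orbF x := by
      intro x hx
      ext y
      simp only [Finset.mem_filter]
      constructor
      · rintro ⟨hyU, hyo⟩
        rw [← hyo]
        simpa using horbmem y (hperN y hyU) 0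
      · intro hy
        refine ⟨?_, horbeq x (hperN x hx) y hy⟩
        obtain ⟨k, -, rfl⟩ := Finset.mem_image.mp hy
        exact hUclosed x hx k
    have hcount : UF.card = (UF.image orbF).card * N := by
      rw [Finset.card_eq_sum_card_image orbF UF,
        Finset.sum_congr rfl (fun b hb => ?_), Finset.sum_const, smul_eq_mul]
      obtain ⟨x, hx, rfl⟩ := Finset.mem_image.mp hb
      rw [hfib x hx, horbcard x hx]
    have hOrb : ∀ x ∈ UF, {y : F | ∃ n : ℕ, f^[n] x = y} = ↑(orbF x) := by
      intro x hx
      ext y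
      simp only [Set.mem_setOf_eq, Finset.mem_coe]
      constructor
      · rintro ⟨n, rfl⟩
        exact horbmem x (hperN x hx) n
      · intro hy
        obtain ⟨n, -, rfl⟩ := Finset.mem_image.mp hy
        exact ⟨n, rfl⟩
    have hOeq : {S : Set F | ∃ e : ℤ, ψ.SameCycle i ((e : ZMod d)) ∧
          S = {y : F | ∃ n : ℕ, f^[n] ((ω ^ e : Fˣ) : F) = y}}
        = ↑((UF.image orbF).image (fun b : Finset F => (↑b : Set F))) := by
      ext S
      simp only [Set.mem_setOf_eq, Finset.coe_image, Set.mem_image, Finset.mem_coe,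
        Finset.mem_image]
      constructor
      · rintro ⟨e, hs, rfl⟩
        exact ⟨orbF ((ω ^ e : Fˣ) : F), ⟨_, hUmem e hs, rfl⟩, (hOrb _ (hUmem e hs)).symm⟩
      · rintro ⟨b, ⟨x, hx, rfl⟩, rfl⟩
        obtain ⟨e, hs, hxe⟩ := hUrep x hx
        subst hxe
        exact ⟨e, hs, (hOrb _ hx).symm⟩
    rw [hOeq, Set.ncard_coe_finset,
      Finset.card_image_of_injective _ Finset.coe_injective]
    have hKm : (UF.image orbF).card * m = t := by
      refine Nat.eq_of_mul_eq_mul_left (hM0 i) ?_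
      calc M * ((UF.image orbF).card * m) = (UF.image orbF).card * (M * m) := by ring
        _ = UF.card := hcount.symm
        _ = M * t := hUcard
    have hfin : Fintype.card F - 1 = (d * m) * (UF.image orbF).card := by
      rw [← hdt, ← hKm]; ring
    rw [hfin, Nat.mul_div_cancel_left _ (Nat.mul_pos (Nat.pos_of_ne_zero (NeZero.ne d)) hm0)]
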